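/- Let G = {m₁, …, m_q, n₁, n₂} be a 2-semidominant set of monomials. For any monomial multidegree m, the set B_m = {L ⊆ G : lcm(L) = m} has cardinality at most 4; moreover, any two elements of B_m contain the same subset of {m₁, …, m_q}, so they differ only in which of n₁, n₂ they contain. -/

import Mathlib

open Finset

variable {X : Type*} [DecidableEq X]

/-- The lcm of a finite set of monomials (monomials = finitely supported
exponent functions): pointwise maximum of exponents. -/
noncomputable def mlcm (L : Finset (X →₀ ℕ)) : X →₀ ℕ := L.sup id

/-- `m` is dominant with respect to `G`: some variable `x` appears in `m`
with exponent at least `k > 0` while every other element of `G` has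
`x`-exponent `< k`. -/
def Dominant (G : Finset (X →₀ ℕ)) (m : X →₀ ℕ) : Prop :=
  ∃ x : X, ∃ k : ℕ, 0 < k ∧ k ≤ m x ∧ ∀ m' ∈ G, m' ≠ m → m' x < k

/-- Total degree of a monomial: sum of its exponents. -/
def mdeg (m : X →₀ ℕ) : ℕ := m.sum fun _ e => e

lemma mlcm_apply (L : Finset (X →₀ ℕ)) (x : X) :
    mlcm L x = L.sup (fun f => f x) := by
  classical
  induction L using Finset.induction with
  | empty => simp [mlcm, Finsupp.bot_eq_zero]
  | insert _ _ h ih =>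
      rw [mlcm, Finset.sup_insert, Finset.sup_insert, ← ih, mlcm]
      simp [Finsupp.sup_apply]

theorem two_semidominant_Bm_card (G : Finset (X →₀ ℕ)) (n₁ n₂ : X →₀ ℕ)
    (h1 : n₁ ∈ G) (h2 : n₂ ∈ G) (hne : n₁ ≠ n₂)
    (hnd1 : ¬ Dominant G n₁) (hnd2 : ¬ Dominant G n₂)
    (hdom : ∀ m ∈ G, m ≠ n₁ → m ≠ n₂ → Dominant G m)
    (m : X →₀ ℕ) :
    (G.powerset.filter (fun L => mlcm L = m)).card ≤ 4 ∧
    (∀ L₁ ⊆ G, ∀ L₂ ⊆ G, mlcm L₁ = m → mlcm L₂ = m →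
      L₁ \ {n₁, n₂} = L₂ \ {n₁, n₂}) := by
  classical
  have step : ∀ L₁ ⊆ G, ∀ L₂ ⊆ G, mlcm L₁ = m → mlcm L₂ = m →
      L₁ \ {n₁, n₂} ⊆ L₂ \ {n₁, n₂} := by
    intro L₁ h₁ L₂ h₂ e₁ e₂ g hg
    simp only [Finset.mem_sdiff, Finset.mem_insert, Finset.mem_singleton, not_or] at hg ⊢
    obtain ⟨hgL, hgn1, hgn2⟩ := hg
    refine ⟨?_, hgn1, hgn2⟩
    have hgG := h₁ hgL
    obtain ⟨x, k, hk0, hkg, hlt⟩ := hdom g hgG hgn1 hgn2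
    by_contra hgL2
    have hle : g x ≤ m x := by
      rw [← e₁, mlcm_apply]
      exact Finset.le_sup (f := fun f => f x) hgL
    have hlt2 : m x < k := by
      rw [← e₂, mlcm_apply]
      refine Finset.sup_lt_iff (by simpa [bot_eq_zero'] using hk0) |>.2 ?_
      intro f hf
      exact hlt f (h₂ hf) (fun h => hgL2 (h ▸ hf))
    omega
  have key : ∀ L₁ ⊆ G, ∀ L₂ ⊆ G, mlcm L₁ = m → mlcm L₂ = m →
      L₁ \ {n₁, n₂} = L₂ \ {n₁, n₂} := fun L₁ h₁ L₂ h₂ e₁ e₂ =>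
    Finset.Subset.antisymm (step L₁ h₁ L₂ h₂ e₁ e₂) (step L₂ h₂ L₁ h₁ e₂ e₁)
  refine ⟨?_, key⟩
  have hcard : (({n₁, n₂} : Finset (X →₀ ℕ)).powerset).card = 4 := by
    rw [Finset.card_powerset, Finset.card_insert_of_notMem (by simp [hne]),
      Finset.card_singleton]
    norm_num
  rw [← hcard]
  apply Finset.card_le_card_of_injOn (fun L => L ∩ {n₁, n₂})
  · intro L hL
    simp only [Finset.mem_coe, Finset.mem_powerset]
    exact Finset.inter_subset_right
  · intro L₁ hL₁ L₂ hL₂ hinter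
    simp only [Finset.coe_filter, Set.mem_setOf_eq, Finset.mem_powerset] at hL₁ hL₂
    have := key L₁ hL₁.1 L₂ hL₂.1 hL₁.2 hL₂.2
    dsimp only at hinter
    calc L₁ = L₁ \ {n₁, n₂} ∪ L₁ ∩ {n₁, n₂} := (Finset.sdiff_union_inter _ _).symm
      _ = L₂ \ {n₁, n₂} ∪ L₂ ∩ {n₁, n₂} := by rw [this, hinter]
      _ = L₂ := Finset.sdiff_union_inter _ _
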